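/- Let T be the transitive tournament on n vertices and (T, τ) its signature. Then Σ_{v ∈ V(T)} d^c_{(T,τ)}(v) = n(n+1)/2 − 1, and (T, τ) contains no properly colored K_{s,t} for any integers s ≥ 2 and t ≥ 3. -/

import Mathlib

private lemma stmt14_two_mul_sum (n : ℕ) :
    2 * ∑ k ∈ Finset.range n, (n - k) = n * (n + 1) := by
  induction n with
  | zero => simp
  | succ n ih =>
    rw [Finset.sum_range_succ]
    have h : ∑ k ∈ Finset.range n, (n + 1 - k) = (∑ k ∈ Finset.range n, (n - k)) + n := by
      have : ∀ k ∈ Finset.range n, n + 1 - k = (n - k) + 1 := by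
        intro k hk; rw [Finset.mem_range] at hk; omega
      rw [Finset.sum_congr rfl this, Finset.sum_add_distrib, Finset.sum_const,
        Finset.card_range, smul_eq_mul, mul_one]
    have e : (n+1) * (n+1+1) = n * (n+1) + 2*(n+1) := by ring
    omega

private lemma stmt14_image (n : ℕ) (v : Fin (n+1)) :
    ((fun u => max v u) '' {u : Fin (n+1) | u ≠ v}) = Set.Ici v \ {0} := by
  ext w
  simp only [Set.mem_image, Set.mem_setOf_eq, Set.mem_diff, Set.mem_Ici, Set.mem_singleton_iff]
  constructor
  · rintro ⟨u, hu, rfl⟩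
    refine ⟨le_max_left _ _, ?_⟩
    intro h
    have hv : v = 0 := le_antisymm (h ▸ le_max_left v u) (Fin.zero_le _)
    have hu0 : u = 0 := le_antisymm (h ▸ le_max_right v u) (Fin.zero_le _)
    exact hu (hu0.trans hv.symm)
  · rintro ⟨hle, hne⟩
    rcases eq_or_ne w v with rfl | hwv
    · exact ⟨0, fun h => hne h.symm, by simp [max_eq_left (Fin.zero_le _)]⟩
    · exact ⟨w, hwv, max_eq_right hle⟩

private lemma stmt14_ncard (n : ℕ) (v : Fin (n+1)) :
    (Set.Ici v \ ({0} : Set (Fin (n+1)))).ncard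
      = n + 1 - (v : ℕ) - (if v = 0 then 1 else 0) := by
  have h : Set.Ici v \ ({0} : Set (Fin (n+1))) = ↑(Finset.Ici v \ {0}) := by
    simp [Finset.coe_sdiff]
  rw [h, Set.ncard_coe_finset]
  rcases eq_or_ne v 0 with rfl | hv
  · rw [Finset.card_sdiff_of_subset (by simp), Fin.card_Ici]
    simp
  · rw [if_neg hv]
    have hd : Finset.Ici v \ {0} = Finset.Ici v := by
      rw [Finset.sdiff_eq_self_iff_disjoint, Finset.disjoint_singleton_right, Finset.mem_Ici]
      intro hle
      exact hv (le_antisymm hle (Fin.zero_le v))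
    rw [hd, Fin.card_Ici]
    simp

private lemma stmt14_sum (n : ℕ) :
    ∑ v : Fin (n+1), ((n+1 : ℕ) - (v : ℕ) - (if v = (0 : Fin (n+1)) then 1 else 0))
      = (n+1)*(n+2)/2 - 1 := by
  have h0 : ∀ v : Fin (n+1), ((n+1 : ℕ) - (v : ℕ) - (if v = (0 : Fin (n+1)) then 1 else 0))
      = (fun k : ℕ => (n+1 : ℕ) - k - (if k = 0 then 1 else 0)) (v : ℕ) := by
    intro v
    simp only [Fin.ext_iff, Fin.val_zero]
  rw [Finset.sum_congr rfl (fun v _ => h0 v),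
    Fin.sum_univ_eq_sum_range (fun k : ℕ => (n+1 : ℕ) - k - (if k = 0 then 1 else 0)),
    Finset.sum_range_succ']
  have h2 : ∀ k ∈ Finset.range n,
      (fun k : ℕ => (n+1:ℕ) - k - (if k = 0 then 1 else 0)) (k+1) = n - k := by
    intro k hk; simp
  have h3 : ∑ k ∈ Finset.range n,
      (fun k : ℕ => (n+1:ℕ) - k - (if k = 0 then 1 else 0)) (k+1)
      = ∑ k ∈ Finset.range n, (n - k) := Finset.sum_congr rfl h2
  rw [h3]
  have := stmt14_two_mul_sum n
  have e : (n+1)*(n+2) = n*(n+1) + 2*n + 2 := by ring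
  norm_num
  omega

/-- For the signature of the transitive tournament on `n` vertices (the complete graph on
`Fin n` in which edge `{i, j}` gets color `max i j`), the sum of color degrees equals
`n(n+1)/2 - 1`, and it contains no properly colored `K_{s,t}` for any `s ≥ 2`, `t ≥ 3`. -/
theorem stmt_14 (n : ℕ) :
    (∑ v : Fin n, ((fun u => max v u) '' {u : Fin n | u ≠ v}).ncard)
        = n * (n + 1) / 2 - 1 ∧
      (∀ s t : ℕ, 2 ≤ s → 3 ≤ t →
        ¬ ∃ (A B : Finset (Fin n)), Disjoint A B ∧ A.card = s ∧ B.card = t ∧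
          (∀ a ∈ A, ∀ b ∈ B, ∀ b' ∈ B, b ≠ b' → max a b ≠ max a b') ∧
          (∀ b ∈ B, ∀ a ∈ A, ∀ a' ∈ A, a ≠ a' → max a b ≠ max a' b)) := by
  constructor
  · -- sum of color degrees
    cases n with
    | zero => simp
    | succ m =>
      have hterm : ∀ v : Fin (m+1),
          ((fun u => max v u) '' {u : Fin (m+1) | u ≠ v}).ncard
            = (m+1 : ℕ) - (v : ℕ) - (if v = 0 then 1 else 0) := by
        intro v
        rw [stmt14_image m v, stmt14_ncard m v]
      rw [Finset.sum_congr rfl (fun v _ => hterm v), stmt14_sum m]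
  · -- no properly colored K_{s,t}
    rintro s t hs ht ⟨A, B, hAB, hA, hB, h1, h2⟩
    have hAne : A.Nonempty := Finset.card_pos.mp (by omega)
    have hBne : B.Nonempty := Finset.card_pos.mp (by omega)
    have hUne : (A ∪ B).Nonempty := hAne.mono Finset.subset_union_left
    set M := (A ∪ B).max' hUne with hM
    have hMmem := (A ∪ B).max'_mem hUne
    rw [Finset.mem_union] at hMmem
    rcases hMmem with hMA | hMB
    · -- M ∈ A : two distinct b, b' ∈ B give same color M
      obtain ⟨b, hb, b', hb', hbne⟩ := Finset.one_lt_card.mp (by omega : 1 < B.card)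
      refine h1 M hMA b hb b' hb' hbne ?_
      have hbM : b ≤ M := (A ∪ B).le_max' b (Finset.mem_union_right _ hb)
      have hb'M : b' ≤ M := (A ∪ B).le_max' b' (Finset.mem_union_right _ hb')
      rw [max_eq_left hbM, max_eq_left hb'M]
    · -- M ∈ B : two distinct a, a' ∈ A give same color M
      obtain ⟨a, ha, a', ha', hane⟩ := Finset.one_lt_card.mp (by omega : 1 < A.card)
      refine h2 M hMB a ha a' ha' hane ?_
      have haM : a ≤ M := (A ∪ B).le_max' a (Finset.mem_union_left _ ha)
      have ha'M : a' ≤ M := (A ∪ B).le_max' a' (Finset.mem_union_left _ ha')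
      rw [max_eq_right haM, max_eq_right ha'M]
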